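/- Existence and uniqueness for a second-order IVP: consider y'' + w²y = G(x, y(x)) on [0,S] with y(0) = l₁, y'(0) = l₂, where w ≠ 0, G : [0,S] × ℝ → ℝ is continuous, and there exists a non-decreasing, right upper semi-continuous φ : [0,∞) → [0,∞) with φ(s) < s for all s > 0 such that (1/r)|G(x, u) − G(x, v)| ≤ w²·φ(|u − v|/r) for all r > 0, x ∈ [0,S], u, v ∈ ℝ. Then the IVP has a unique solution in C[0,S]. -/

import Mathlib

open Set
open scoped NNReal

lemma global_ode_existence {E : Type*} [NormedAddCommGroup E] [NormedSpace ℝ E]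
    [CompleteSpace E]
    (F : ℝ → E → E) (K : ℝ≥0) (A S : ℝ) (hS : 0 ≤ S)
    (hcont : ∀ x, Continuous fun t => F t x)
    (hlip : ∀ t, LipschitzWith K (F t))
    (hA : ∀ t x, ‖F t x‖ ≤ A + (K : ℝ) * ‖x‖) (hA0 : 0 ≤ A) (hK : 1 ≤ (K : ℝ))
    (x₀ : E) :
    ∃ f : ℝ → E, f 0 = x₀ ∧
      ∀ t ∈ Icc 0 S, HasDerivWithinAt f (F t (f t)) (Icc 0 S) t := by
  have hK0 : (0:ℝ) ≤ K := K.2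
  set h : ℝ := 1 / (A + 2 * (K:ℝ) + 1) with hh
  have hden : (0:ℝ) < A + 2 * (K:ℝ) + 1 := by linarith
  have hpos : 0 < h := by positivity
  -- one extension step
  have step : ∀ b : ℝ, 0 ≤ b → b < S →
      (∃ f : ℝ → E, f 0 = x₀ ∧
        ∀ t ∈ Icc 0 b, HasDerivWithinAt f (F t (f t)) (Icc 0 b) t) →
      ∃ f : ℝ → E, f 0 = x₀ ∧
        ∀ t ∈ Icc 0 (min (b + h) S),
          HasDerivWithinAt f (F t (f t)) (Icc 0 (min (b + h) S)) t := by
    rintro b hb0 hbS ⟨f, hf0, hf'⟩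
    set b' : ℝ := min (b + h) S with hb'
    have hbb' : b ≤ b' := le_min (by linarith) hbS.le
    have hb'h : b' - b ≤ h := by
      have := min_le_left (b + h) S
      simp only [← hb'] at this ⊢
      linarith
    set y₀ : E := f b with hy₀
    have hn : (0:ℝ) ≤ ‖y₀‖ := norm_nonneg _
    have hC0' : (0:ℝ) ≤ A + (K:ℝ) * (2 * ‖y₀‖ + 1) := by nlinarith
    have hpl : IsPicardLindelof F (tmin := b) (tmax := b') ⟨b, le_rfl, hbb'⟩ y₀
        ⟨‖y₀‖ + 1, by positivity⟩ 0 ⟨A + (K:ℝ) * (2 * ‖y₀‖ + 1), hC0'⟩ K :=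
      { lipschitzOnWith := fun t _ => (hlip t).lipschitzOnWith
        continuousOn := fun x _ => (hcont x).continuousOn
        norm_le := by
          intro t _ x hx
          have h1 : ‖x‖ ≤ ‖y₀‖ + (‖y₀‖ + 1) := norm_le_of_mem_closedBall hx
          have h2 := hA t x
          show ‖F t x‖ ≤ A + (K:ℝ) * (2 * ‖y₀‖ + 1)
          nlinarith
        mul_max_le := by
          show (A + (K:ℝ) * (2 * ‖y₀‖ + 1)) * max (b' - b) (b - b) ≤ (‖y₀‖ + 1) - ((0:ℝ≥0):ℝ)
          rw [NNReal.coe_zero, sub_zero]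
          have hC0 : (0:ℝ) ≤ A + (K:ℝ) * (2 * ‖y₀‖ + 1) := by nlinarith
          have hmax : max (b' - b) (b - b) ≤ h := by
            apply max_le hb'h; linarith
          calc (A + (K:ℝ) * (2 * ‖y₀‖ + 1)) * max (b' - b) (b - b)
              ≤ (A + (K:ℝ) * (2 * ‖y₀‖ + 1)) * h :=
                mul_le_mul_of_nonneg_left hmax hC0
            _ ≤ ‖y₀‖ + 1 := by
                rw [hh, mul_one_div, div_le_iff₀ hden]
                nlinarith }
    obtain ⟨f₂, hf₂b, hf₂'⟩ : ∃ f₂ : ℝ → E, f₂ b = y₀ ∧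
        ∀ t ∈ Icc b b', HasDerivWithinAt f₂ (F t (f₂ t)) (Icc b b') t :=
      hpl.exists_eq_forall_mem_Icc_hasDerivWithinAt₀
    refine ⟨fun t => if t ≤ b then f t else f₂ t, by simp [hb0, hf0], ?_⟩
    intro t ht
    rcases lt_trichotomy t b with hlt | rfl | hgt
    · have h1 : Icc 0 b ∈ nhdsWithin t (Icc 0 b') :=
        mem_nhdsWithin.mpr ⟨Iio b, isOpen_Iio, hlt, fun x hx => ⟨hx.2.1, hx.1.le⟩⟩
      have hd := (hf' t ⟨ht.1, hlt.le⟩).mono_of_mem_nhdsWithin h1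
      have hev : (fun u => if u ≤ b then f u else f₂ u) =ᶠ[nhdsWithin t (Icc 0 b')] f := by
        filter_upwards [nhdsWithin_le_nhds (Iio_mem_nhds hlt)] with x hx
        simp [(mem_Iio.mp hx).le]
      show HasDerivWithinAt _ (F t (if t ≤ b then f t else f₂ t)) _ t
      rw [if_pos hlt.le]
      exact hd.congr_of_eventuallyEq hev (by simp [hlt.le])
    · show HasDerivWithinAt _ (F t (if t ≤ t then f t else f₂ t)) _ t
      rw [if_pos le_rfl]
      have hleft : HasDerivWithinAt (fun u => if u ≤ t then f u else f₂ u)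
          (F t (f t)) (Icc 0 t) t := by
        refine (hf' t ⟨ht.1, le_rfl⟩).congr (fun x hx => by simp [hx.2]) (by simp)
      have hright : HasDerivWithinAt (fun u => if u ≤ t then f u else f₂ u)
          (F t (f t)) (Icc t b') t := by
        have h2 := hf₂' t ⟨le_rfl, hbb'⟩
        rw [hf₂b, hy₀] at h2
        refine h2.congr (fun x hx => ?_) (by simp [hf₂b, hy₀])
        by_cases hxb : x ≤ t
        · have : x = t := le_antisymm hxb hx.1
          subst this; simp [hf₂b, hy₀]
        · simp [hxb]
      have := hleft.union hright
      rwa [Icc_union_Icc_eq_Icc ht.1 hbb'] at this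
    · have h1 : Icc b b' ∈ nhdsWithin t (Icc 0 b') :=
        mem_nhdsWithin.mpr ⟨Ioi b, isOpen_Ioi, hgt, fun x hx => ⟨hx.1.le, hx.2.2⟩⟩
      have hd := (hf₂' t ⟨hgt.le, ht.2⟩).mono_of_mem_nhdsWithin h1
      have hev : (fun u => if u ≤ b then f u else f₂ u) =ᶠ[nhdsWithin t (Icc 0 b')] f₂ := by
        filter_upwards [nhdsWithin_le_nhds (Ioi_mem_nhds hgt)] with x hx
        simp [not_le.mpr (mem_Ioi.mp hx)]
      show HasDerivWithinAt _ (F t (if t ≤ b then f t else f₂ t)) _ t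
      rw [if_neg (not_le.mpr hgt)]
      exact hd.congr_of_eventuallyEq hev (by simp [not_le.mpr hgt])
  -- iterate
  have main : ∀ n : ℕ, ∃ f : ℝ → E, f 0 = x₀ ∧
      ∀ t ∈ Icc 0 (min ((n : ℝ) * h) S),
        HasDerivWithinAt f (F t (f t)) (Icc 0 (min ((n : ℝ) * h) S)) t := by
    intro n
    induction n with
    | zero =>
        refine ⟨fun _ => x₀, rfl, ?_⟩
        intro t ht
        simp only [Nat.cast_zero, zero_mul, min_eq_left hS, Icc_self, mem_singleton_iff] at ht ⊢
        subst ht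
        rw [hasDerivWithinAt_iff_hasFDerivWithinAt]
        simp only [HasFDerivWithinAt, nhdsWithin_singleton, hasFDerivAtFilter_iff_isLittleO,
          Asymptotics.isLittleO_pure]
        simp
    | succ n ih =>
        by_cases hc : S ≤ (n : ℝ) * h
        · have h1 : min ((n : ℝ) * h) S = S := min_eq_right hc
          have h2 : min (((n : ℕ) + 1 : ℝ) * h) S = S := by
            apply min_eq_right; nlinarith
          rw [h1] at ih
          push_cast
          rw [h2]
          exact ih
        · push_neg at hc
          have hb0 : (0:ℝ) ≤ (n : ℝ) * h := by positivity
          have hmin : min ((n : ℝ) * h) S = (n : ℝ) * h := min_eq_left hc.le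
          rw [hmin] at ih
          have := step ((n : ℝ) * h) hb0 hc ih
          have harith : (n : ℝ) * h + h = ((n : ℕ) + 1 : ℝ) * h := by ring
          rw [harith] at this
          push_cast
          exact this
  obtain ⟨n, hn⟩ := exists_nat_ge (S / h)
  have hSn : S ≤ (n : ℝ) * h := by
    rw [div_le_iff₀ hpos] at hn
    linarith
  obtain ⟨f, hf0, hf'⟩ := main n
  rw [min_eq_right hSn] at hf'
  exact ⟨f, hf0, hf'⟩

open Set

/-- Existence and uniqueness of a solution in C[0,S] to the second-order IVP
y'' + w²y = G(x, y(x)), y(0) = l₁, y'(0) = l₂, under a Boyd–Wong type condition. -/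
theorem second_order_ivp_unique_solution
    (S w l₁ l₂ : ℝ) (hS : 0 < S) (hw : w ≠ 0)
    (G : ℝ → ℝ → ℝ)
    (hG : ContinuousOn (fun p : ℝ × ℝ => G p.1 p.2) (Icc 0 S ×ˢ univ))
    (φ : ℝ → ℝ)
    (hφmono : ∀ s t : ℝ, 0 ≤ s → s ≤ t → φ s ≤ φ t)
    (hφnn : ∀ s : ℝ, 0 ≤ s → 0 ≤ φ s)
    (hφlt : ∀ s : ℝ, 0 < s → φ s < s)
    (hφusc : ∀ s : ℝ, 0 ≤ s → ∀ u : ℕ → ℝ, (∀ n, s ≤ u n) →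
      Filter.Tendsto u Filter.atTop (nhds s) →
      Filter.limsup (fun n => φ (u n)) Filter.atTop ≤ φ s)
    (hGlip : ∀ r : ℝ, 0 < r → ∀ x ∈ Icc (0 : ℝ) S, ∀ u v : ℝ,
      (1 / r) * |G x u - G x v| ≤ w ^ 2 * φ (|u - v| / r)) :
    ∃ y y' : ℝ → ℝ,
      (ContinuousOn y (Icc 0 S) ∧
        (∀ t ∈ Icc (0 : ℝ) S, HasDerivWithinAt y (y' t) (Icc 0 S) t) ∧
        (∀ t ∈ Icc (0 : ℝ) S,
          HasDerivWithinAt y' (G t (y t) - w ^ 2 * y t) (Icc 0 S) t) ∧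
        y 0 = l₁ ∧ y' 0 = l₂) ∧
      ∀ z z' : ℝ → ℝ,
        (ContinuousOn z (Icc 0 S) ∧
          (∀ t ∈ Icc (0 : ℝ) S, HasDerivWithinAt z (z' t) (Icc 0 S) t) ∧
          (∀ t ∈ Icc (0 : ℝ) S,
            HasDerivWithinAt z' (G t (z t) - w ^ 2 * z t) (Icc 0 S) t) ∧
          z 0 = l₁ ∧ z' 0 = l₂) →
        Set.EqOn z y (Icc 0 S) := by
  have hw2 : (0:ℝ) < w ^ 2 := by positivity
  have hφ1 : (0:ℝ) ≤ φ 1 := hφnn 1 zero_le_one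
  -- clamping map
  set π : ℝ → ℝ := fun t => max 0 (min t S) with hπdef
  have hπmem : ∀ t, π t ∈ Icc 0 S := fun t =>
    ⟨le_max_left _ _, max_le hS.le (min_le_right _ _)⟩
  have hπeq : ∀ t ∈ Icc (0:ℝ) S, π t = t := by
    intro t ht
    simp only [hπdef]
    rw [min_eq_left ht.2, max_eq_right ht.1]
  have hπcont : Continuous π :=
    continuous_const.max (continuous_id.min continuous_const)
  -- Lipschitz property of G
  have hGL : ∀ x ∈ Icc (0:ℝ) S, ∀ u v : ℝ, |G x u - G x v| ≤ w ^ 2 * φ 1 * |u - v| := by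
    intro x hx u v
    rcases eq_or_ne u v with rfl | hne
    · simp
    · have hr : 0 < |u - v| := abs_pos.mpr (sub_ne_zero.mpr hne)
      have h1 := hGlip |u - v| hr x hx u v
      rw [div_self hr.ne'] at h1
      calc |G x u - G x v| = 1 / |u - v| * |G x u - G x v| * |u - v| := by
            field_simp
        _ ≤ w ^ 2 * φ 1 * |u - v| := mul_le_mul_of_nonneg_right h1 hr.le
  -- bound on G · 0
  obtain ⟨A₀, hA₀⟩ : ∃ A₀, ∀ x ∈ Icc (0:ℝ) S, ‖G x 0‖ ≤ A₀ := by
    apply IsCompact.exists_bound_of_continuousOn isCompact_Icc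
    have : ContinuousOn (fun x : ℝ => G x 0) (Icc 0 S) := by
      have h2 : Continuous (fun x : ℝ => ((x, 0) : ℝ × ℝ)) := by continuity
      exact hG.comp h2.continuousOn (fun x hx => ⟨hx, mem_univ _⟩)
    exact this
  set A : ℝ := max A₀ 0 with hA
  have hA0 : (0:ℝ) ≤ A := le_max_right _ _
  set K : ℝ := max 1 (w ^ 2 * (φ 1 + 1)) with hKdef
  have hK1 : (1:ℝ) ≤ K := le_max_left _ _
  have hK0 : (0:ℝ) ≤ K := zero_le_one.trans hK1
  have hKw : w ^ 2 * (φ 1 + 1) ≤ K := le_max_right _ _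
  set K0 : NNReal := ⟨K, hK0⟩ with hK0def
  -- the vector field
  set F : ℝ → ℝ × ℝ → ℝ × ℝ :=
    fun t p => (p.2, G (π t) p.1 - w ^ 2 * p.1) with hFdef
  have hcont : ∀ p : ℝ × ℝ, Continuous fun t => F t p := by
    intro p
    apply Continuous.prodMk continuous_const
    apply Continuous.sub _ continuous_const
    have h2 : Continuous (fun t : ℝ => ((π t, p.1) : ℝ × ℝ)) :=
      hπcont.prodMk continuous_const
    exact hG.comp_continuous h2 (fun t => ⟨hπmem t, mem_univ _⟩)
  have hlip : ∀ t, LipschitzWith K0 (F t) := by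
    intro t
    apply LipschitzWith.of_dist_le_mul
    intro p q
    rw [Prod.dist_eq]
    have hd1 : dist p.1 q.1 ≤ dist p q := le_max_left _ _
    have hd2 : dist p.2 q.2 ≤ dist p q := le_max_right _ _
    have hdnn : (0:ℝ) ≤ dist p q := dist_nonneg
    apply max_le
    · show dist p.2 q.2 ≤ K * dist p q
      nlinarith
    · show dist (G (π t) p.1 - w ^ 2 * p.1) (G (π t) q.1 - w ^ 2 * q.1) ≤ K * dist p q
      rw [Real.dist_eq]
      have h1 : |G (π t) p.1 - G (π t) q.1| ≤ w ^ 2 * φ 1 * |p.1 - q.1| :=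
        hGL _ (hπmem t) _ _
      have h2 : |(G (π t) p.1 - w ^ 2 * p.1) - (G (π t) q.1 - w ^ 2 * q.1)|
          ≤ |G (π t) p.1 - G (π t) q.1| + w ^ 2 * |p.1 - q.1| := by
        have := abs_sub (G (π t) p.1 - G (π t) q.1) (w ^ 2 * (p.1 - q.1))
        calc |(G (π t) p.1 - w ^ 2 * p.1) - (G (π t) q.1 - w ^ 2 * q.1)|
            = |(G (π t) p.1 - G (π t) q.1) - w ^ 2 * (p.1 - q.1)| := by ring_nf
          _ ≤ |G (π t) p.1 - G (π t) q.1| + |w ^ 2 * (p.1 - q.1)| := abs_sub _ _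
          _ = |G (π t) p.1 - G (π t) q.1| + w ^ 2 * |p.1 - q.1| := by
              rw [abs_mul, abs_of_pos hw2]
      have h3 : |p.1 - q.1| = dist p.1 q.1 := (Real.dist_eq _ _).symm
      rw [h3] at h1 h2
      have hd1nn : (0:ℝ) ≤ dist p.1 q.1 := dist_nonneg
      calc |G (π t) p.1 - w ^ 2 * p.1 - (G (π t) q.1 - w ^ 2 * q.1)|
          ≤ w ^ 2 * (φ 1 + 1) * dist p.1 q.1 := by nlinarith
        _ ≤ K * dist p.1 q.1 := mul_le_mul_of_nonneg_right hKw hd1nn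
        _ ≤ K * dist p q := mul_le_mul_of_nonneg_left hd1 hK0
  have hAb : ∀ (t : ℝ) (p : ℝ × ℝ), ‖F t p‖ ≤ A + K * ‖p‖ := by
    intro t p
    have hn1 : ‖p.1‖ ≤ ‖p‖ := le_max_left _ _
    have hn2 : ‖p.2‖ ≤ ‖p‖ := le_max_right _ _
    have hpn : (0:ℝ) ≤ ‖p‖ := norm_nonneg _
    rw [Prod.norm_def]
    apply max_le
    · show ‖p.2‖ ≤ A + K * ‖p‖
      nlinarith
    · show ‖G (π t) p.1 - w ^ 2 * p.1‖ ≤ A + K * ‖p‖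
      rw [Real.norm_eq_abs]
      have h1 : |G (π t) p.1 - G (π t) 0| ≤ w ^ 2 * φ 1 * |p.1 - 0| :=
        hGL _ (hπmem t) _ _
      have h2 : ‖G (π t) 0‖ ≤ A₀ := hA₀ _ (hπmem t)
      rw [Real.norm_eq_abs] at h2
      have h3 : |G (π t) p.1 - w ^ 2 * p.1| ≤ |G (π t) p.1 - G (π t) 0| + |G (π t) 0| + w ^ 2 * |p.1| := by
        have := abs_sub_abs_le_abs_sub (G (π t) p.1) (G (π t) 0)
        have hh := abs_add_le (G (π t) p.1 - G (π t) 0 + G (π t) 0) (- (w^2 * p.1))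
        calc |G (π t) p.1 - w ^ 2 * p.1|
            ≤ |G (π t) p.1| + |w ^ 2 * p.1| := abs_sub _ _
          _ ≤ (|G (π t) p.1 - G (π t) 0| + |G (π t) 0|) + w ^ 2 * |p.1| := by
              have := abs_sub_abs_le_abs_sub (G (π t) p.1) (G (π t) 0)
              rw [abs_mul, abs_of_pos hw2]
              have habs := abs_add_le (G (π t) p.1 - G (π t) 0) (G (π t) 0)
              have : G (π t) p.1 = (G (π t) p.1 - G (π t) 0) + G (π t) 0 := by ring
              nlinarith [abs_nonneg (G (π t) p.1 - G (π t) 0), abs_nonneg (G (π t) 0),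
                abs_add_le (G (π t) p.1 - G (π t) 0) (G (π t) 0)]
      have hn1' : |p.1| ≤ ‖p‖ := by rwa [Real.norm_eq_abs] at hn1
      rw [sub_zero] at h1
      have h4 : w ^ 2 * (φ 1 + 1) * |p.1| ≤ K * |p.1| :=
        mul_le_mul_of_nonneg_right hKw (abs_nonneg _)
      have h5 : K * |p.1| ≤ K * ‖p‖ := mul_le_mul_of_nonneg_left hn1' hK0
      have h6 : A₀ ≤ A := le_max_left _ _
      nlinarith
  -- existence
  obtain ⟨f, hf0, hf'⟩ := global_ode_existence F K0 A S hS.le hcont hlip hAb hA0 hK1 (l₁, l₂)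
  have hFval : ∀ t ∈ Icc (0:ℝ) S, ∀ p : ℝ × ℝ,
      F t p = (p.2, G t p.1 - w ^ 2 * p.1) := by
    intro t ht p
    simp only [hFdef, hπeq t ht]
  refine ⟨fun t => (f t).1, fun t => (f t).2, ⟨?_, ?_, ?_, ?_, ?_⟩, ?_⟩
  · intro t ht
    exact ((hf' t ht).continuousWithinAt).fst
  · intro t ht
    have h1 := (ContinuousLinearMap.fst ℝ ℝ ℝ).hasFDerivAt.comp_hasDerivWithinAt t (hf' t ht)
    have h2 : (ContinuousLinearMap.fst ℝ ℝ ℝ) (F t (f t)) = (f t).2 := by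
      rw [hFval t ht]; rfl
    rw [h2] at h1
    exact h1
  · intro t ht
    have h1 := (ContinuousLinearMap.snd ℝ ℝ ℝ).hasFDerivAt.comp_hasDerivWithinAt t (hf' t ht)
    have h2 : (ContinuousLinearMap.snd ℝ ℝ ℝ) (F t (f t)) = G t (f t).1 - w ^ 2 * (f t).1 := by
      rw [hFval t ht]; rfl
    rw [h2] at h1
    exact h1
  · show (f 0).1 = l₁; rw [hf0]
  · show (f 0).2 = l₂; rw [hf0]
  -- uniqueness
  rintro z z' ⟨hzc, hz1, hz2, hz0, hz'0⟩
  set Z : ℝ → ℝ × ℝ := fun t => (z t, z' t) with hZdef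
  have hZd : ∀ t ∈ Icc (0:ℝ) S, HasDerivWithinAt Z (F t (Z t)) (Icc 0 S) t := by
    intro t ht
    rw [hFval t ht]
    exact (hz1 t ht).prodMk (hz2 t ht)
  have hmem : ∀ t ∈ Ico (0:ℝ) S, Icc (0:ℝ) S ∈ nhdsWithin t (Ici t) := by
    intro t ht
    exact mem_nhdsWithin.mpr ⟨Iio S, isOpen_Iio, ht.2,
      fun x hx => ⟨ht.1.trans hx.2, hx.1.le⟩⟩
  have huniq : EqOn Z f (Icc 0 S) := by
    apply ODE_solution_unique_of_mem_Icc_right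
      (v := F) (s := fun _ => (univ : Set (ℝ × ℝ))) (K := K0)
      (fun t _ => (hlip t).lipschitzOnWith)
      (fun t ht => (hZd t ht).continuousWithinAt)
      (fun t ht => (hZd t (Ico_subset_Icc_self ht)).mono_of_mem_nhdsWithin (hmem t ht))
      (fun t _ => mem_univ _)
      (fun t ht => (hf' t ht).continuousWithinAt)
      (fun t ht => (hf' t (Ico_subset_Icc_self ht)).mono_of_mem_nhdsWithin (hmem t ht))
      (fun t _ => mem_univ _)
    rw [hf0, hZdef]
    simp [hz0, hz'0]
  intro t ht
  have := huniq ht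
  exact congrArg Prod.fst this
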